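/- arXiv:1506.06538 — 2 statements merged into one kernel-verified Lean document; each statement's English description precedes it below -/
import Mathlib

section
/- Fix m ≥ 1 and c ≥ 0, and define c_0 = 0, c_1 = 1, c_n = min{ k < n : m·k + c_k ≥ n } for n ≥ 2. Then this sequence is well-defined (the minimized set is nonempty for each n ≥ 2) and satisfies c_{n+1} ∈ {c_n, c_n + 1} for all n ≥ 1. -/
/-- The sequence defined by `a 0 = 0`, `a 1 = 1`, and for `n ≥ 2`,
`a n = min { k < n : m * k + a k ≥ n }` (for `m = 1` this is the sequence `a` of the paper). -/
noncomputable def jseq (m : ℕ) (n : ℕ) : ℕ :=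
  Nat.strongRecOn n (fun n ih =>
    if n = 0 then 0
    else if n = 1 then 1
    else sInf {k : ℕ | ∃ h : k < n, n ≤ m * k + ih k h})

theorem jseq_unfold (m n : ℕ) : jseq m n =
    if n = 0 then 0 else if n = 1 then 1
    else sInf {k : ℕ | k < n ∧ n ≤ m * k + jseq m k} := by
  rw [jseq, Nat.strongRecOn_eq]
  simp only [exists_prop]
  rfl

theorem jseq0 (m : ℕ) : jseq m 0 = 0 := by rw [jseq_unfold]; simp

theorem jseq1 (m : ℕ) : jseq m 1 = 1 := by rw [jseq_unfold]; simp

theorem jseq_eq (m n : ℕ) (hn : 2 ≤ n) :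
    jseq m n = sInf {k : ℕ | k < n ∧ n ≤ m * k + jseq m k} := by
  rw [jseq_unfold]
  have h0 : n ≠ 0 := by omega
  have h1 : n ≠ 1 := by omega
  simp [h0, h1]

theorem jseq_pos (m : ℕ) (hm : 1 ≤ m) : ∀ n, 1 ≤ n → 1 ≤ jseq m n := by
  intro n
  induction n using Nat.strong_induction_on with
  | _ n ih =>
    intro hn
    rcases eq_or_lt_of_le hn with h1 | h2
    · rw [← h1, jseq1]
    · have hne : {k : ℕ | k < n ∧ n ≤ m * k + jseq m k}.Nonempty := by
        refine ⟨n - 1, by omega, ?_⟩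
        have hp : 1 ≤ jseq m (n - 1) := ih (n - 1) (by omega) (by omega)
        have : n - 1 ≤ m * (n - 1) := Nat.le_mul_of_pos_left _ hm
        omega
      have hmem := Nat.sInf_mem hne
      rw [jseq_eq m n h2]
      obtain ⟨hlt, hge⟩ := hmem
      by_contra h
      have h0 : sInf {k : ℕ | k < n ∧ n ≤ m * k + jseq m k} = 0 := by omega
      rw [h0, jseq0] at hge
      omega

theorem jseq_ne (m : ℕ) (hm : 1 ≤ m) (n : ℕ) (hn : 2 ≤ n) :
    {k : ℕ | k < n ∧ n ≤ m * k + jseq m k}.Nonempty := by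
  refine ⟨n - 1, by omega, ?_⟩
  have hp : 1 ≤ jseq m (n - 1) := jseq_pos m hm (n - 1) (by omega)
  have : n - 1 ≤ m * (n - 1) := Nat.le_mul_of_pos_left _ hm
  omega

theorem jseq_two (m : ℕ) (hm : 1 ≤ m) : jseq m 2 = 1 := by
  have h1 : (1 : ℕ) ∈ {k : ℕ | k < 2 ∧ 2 ≤ m * k + jseq m k} := by
    constructor
    · omega
    · rw [jseq1]; omega
  have hle := Nat.sInf_le h1
  have hge : 1 ≤ jseq m 2 := jseq_pos m hm 2 (by omega)
  rw [jseq_eq m 2 (by omega)] at hge ⊢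
  omega

theorem jseq_mono_succ (m : ℕ) (hm : 1 ≤ m) (n : ℕ) : jseq m n ≤ jseq m (n + 1) := by
  match n with
  | 0 => rw [jseq0]; omega
  | 1 => rw [jseq1, jseq_two m hm]
  | (k + 2) =>
    set n := k + 2
    have hn : 2 ≤ n := by omega
    have hmem := Nat.sInf_mem (jseq_ne m hm (n + 1) (by omega))
    rw [← jseq_eq m (n + 1) (by omega)] at hmem
    obtain ⟨hlt, hge⟩ := hmem
    have hmemn := Nat.sInf_mem (jseq_ne m hm n hn)
    rw [← jseq_eq m n hn] at hmemn
    obtain ⟨hlt2, hge2⟩ := hmemn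
    rcases lt_or_ge (jseq m (n + 1)) n with h | h
    · have : jseq m (n + 1) ∈ {k : ℕ | k < n ∧ n ≤ m * k + jseq m k} := ⟨h, by omega⟩
      rw [jseq_eq m n hn]
      exact Nat.sInf_le this
    · omega

theorem jseq_mono (m : ℕ) (hm : 1 ≤ m) : Monotone (jseq m) :=
  monotone_nat_of_le_succ (jseq_mono_succ m hm)

theorem jseq_step_le (m : ℕ) (hm : 1 ≤ m) (n : ℕ) (hn : 1 ≤ n) :
    jseq m (n + 1) ≤ jseq m n + 1 := by
  rcases eq_or_lt_of_le hn with h1 | h2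
  · rw [← h1, jseq_two m hm, jseq1]
    omega
  · have hmemn := Nat.sInf_mem (jseq_ne m hm n h2)
    rw [← jseq_eq m n h2] at hmemn
    obtain ⟨hlt, hge⟩ := hmemn
    set c := jseq m n
    have hmono : jseq m c ≤ jseq m (c + 1) := jseq_mono_succ m hm c
    have hmc : c + 1 ≤ m * (c + 1) := Nat.le_mul_of_pos_left _ hm
    have hmem : c + 1 ∈ {k : ℕ | k < n + 1 ∧ n + 1 ≤ m * k + jseq m k} := by
      refine ⟨by omega, ?_⟩
      have : m * (c + 1) = m * c + m := by ring
      omega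
    rw [jseq_eq m (n + 1) (by omega)]
    exact Nat.sInf_le hmem

/-- For `m ≥ 1` the sequence `c` is well-defined (the minimized set is nonempty for
`n ≥ 2`) and satisfies `c (n+1) ∈ {c n, c n + 1}` for all `n ≥ 1`. -/
theorem jseq_general_well_defined_and_step (m : ℕ) (hm : 1 ≤ m) :
    (∀ n : ℕ, 2 ≤ n → {k : ℕ | k < n ∧ n ≤ m * k + jseq m k}.Nonempty) ∧
      (∀ n : ℕ, 1 ≤ n → jseq m (n + 1) = jseq m n ∨ jseq m (n + 1) = jseq m n + 1) := by
  refine ⟨fun n hn => jseq_ne m hm n hn, fun n hn => ?_⟩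
  have h1 := jseq_mono_succ m hm n
  have h2 := jseq_step_le m hm n hn
  omega
end

section
/- For the Jaco graph J_n(mx) (f(x) = mx, c = 0) with maximum degree Δ(J_n(mx)) attained first at prime Jaconian vertex v_k with d(v_k) = Δ: the number of arcs satisfies ε(J_n(mx)) = ε(H) + Σ_{i=1}^{k} d⁺(v_i), where H is the complete subgraph induced on v_{k+1}, ..., v_n (the Hope subgraph), so ε(J_n(mx)) = (n−k)(n−k−1)/2 + Σ_{i=1}^{k} d⁺(v_i). -/
/-- In-degree of vertex `j` in the infinite linear Jaco graph for `f x = m * x + c`: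
`d⁻(v_j)` is the number of tails `1 ≤ i < j` with `f i + i - d⁻(v_i) ≥ j`
(stated subtraction-free as `j + d⁻(v_i) ≤ m * i + c + i`). -/
noncomputable def jacoIndeg (m c : ℕ) (j : ℕ) : ℕ :=
  Nat.strongRecOn j (fun j ih =>
    ((Finset.Ico 1 j).attach.filter (fun i =>
      j + ih i.1 (Finset.mem_Ico.mp i.2).2 ≤ m * i.1 + c + i.1)).card)

/-- `(v_i, v_j)` is an arc of the infinite Jaco graph `J_∞(mx + c)` iff `1 ≤ i < j` and
`f(i) + i - d⁻(v_i) ≥ j`. -/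
def JacoArc (m c i j : ℕ) : Prop :=
  1 ≤ i ∧ i < j ∧ j + jacoIndeg m c i ≤ m * i + c + i

noncomputable instance (m c i j : ℕ) : Decidable (JacoArc m c i j) := by
  unfold JacoArc; infer_instance

/-- Out-degree of `v_i` in the infinite Jaco graph `J_∞(mx + c)`. -/
noncomputable def jacoOutdegInf (m c i : ℕ) : ℕ := {j | JacoArc m c i j}.ncard

/-- Out-degree of `v_i` in the finite Jaco graph `J_n(mx + c)`. -/
noncomputable def jacoOutdeg (m c n i : ℕ) : ℕ :=
  ((Finset.Icc 1 n).filter (fun j => JacoArc m c i j)).card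

/-- Total degree of `v_i` in the underlying graph of `J_n(mx + c)`
(for `i ≤ n` the in-degree in `J_n` agrees with that in `J_∞`). -/
noncomputable def jacoDeg (m c n i : ℕ) : ℕ := jacoIndeg m c i + jacoOutdeg m c n i

/-- Number of arcs of the finite Jaco graph `J_n(mx + c)`. -/
noncomputable def jacoArcs (m c n : ℕ) : ℕ :=
  (((Finset.Icc 1 n) ×ˢ (Finset.Icc 1 n)).filter (fun p => JacoArc m c p.1 p.2)).card


lemma jacoIndeg_eq (m c j : ℕ) :
    jacoIndeg m c j = ((Finset.Ico 1 j).filter (fun i =>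
      j + jacoIndeg m c i ≤ m * i + c + i)).card := by
  rw [jacoIndeg, Nat.strongRecOn]
  conv_lhs => rw [WellFounded.fix_eq]
  have h : ∀ i : ℕ, (WellFounded.fix (Nat.lt_wfRel.wf) (fun j ih =>
      ((Finset.Ico 1 j).attach.filter (fun i =>
        j + ih i.1 (Finset.mem_Ico.mp i.2).2 ≤ m * i.1 + c + i.1)).card) i) = jacoIndeg m c i :=
    fun i => rfl
  simp only [h]
  rw [Finset.card_filter, Finset.card_filter]
  exact Finset.sum_attach (Finset.Ico 1 j)
    (fun i => if j + jacoIndeg m c i ≤ m * i + c + i then (1:ℕ) else 0)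

lemma jacoIndeg_le (m c j : ℕ) : jacoIndeg m c j ≤ j - 1 := by
  rw [jacoIndeg_eq]
  calc _ ≤ (Finset.Ico 1 j).card := Finset.card_filter_le _ _
  _ = j - 1 := Nat.card_Ico 1 j

lemma jacoIndeg_succ_le (m c i : ℕ) : jacoIndeg m c (i + 1) ≤ jacoIndeg m c i + 1 := by
  rw [jacoIndeg_eq m c (i+1), jacoIndeg_eq m c i]
  have hsub : (Finset.Ico 1 (i+1)).filter (fun x => i + 1 + jacoIndeg m c x ≤ m * x + c + x)
      ⊆ insert i ((Finset.Ico 1 i).filter (fun x => i + jacoIndeg m c x ≤ m * x + c + x)) := by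
    intro x hx
    simp only [Finset.mem_filter, Finset.mem_Ico] at hx
    rcases eq_or_ne x i with rfl | hne
    · exact Finset.mem_insert_self _ _
    · refine Finset.mem_insert_of_mem ?_
      simp only [Finset.mem_filter, Finset.mem_Ico]
      omega
  calc _ ≤ (insert i ((Finset.Ico 1 i).filter
        (fun x => i + jacoIndeg m c x ≤ m * x + c + x))).card := Finset.card_le_card hsub
  _ ≤ _ := Finset.card_insert_le _ _

lemma reachGe_mono (m c : ℕ) (hm : 1 ≤ m) {a b N : ℕ} (hab : a ≤ b)
    (h : N + jacoIndeg m c a ≤ m * a + c + a) : N + jacoIndeg m c b ≤ m * b + c + b := by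
  induction b, hab using Nat.le_induction with
  | base => exact h
  | succ b hab ih =>
    have h1 := jacoIndeg_succ_le m c b
    have h2 : m * (b + 1) = m * b + m := by ring
    omega

lemma outdeg_small (m c n v : ℕ) (hm : 1 ≤ m) (hv : 1 ≤ v)
    (hr : m * v + c + v < n + jacoIndeg m c v) :
    jacoOutdeg m c n v = m * v + c - jacoIndeg m c v := by
  have hD := jacoIndeg_le m c v
  have hvm : v ≤ m * v + c := le_add_right (Nat.le_mul_of_pos_left v hm)
  rw [jacoOutdeg]
  have : (Finset.Icc 1 n).filter (fun j => JacoArc m c v j)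
      = Finset.Icc (v + 1) (m * v + c + v - jacoIndeg m c v) := by
    ext j
    rw [Finset.mem_filter]
    simp only [Finset.mem_filter, Finset.mem_Icc, JacoArc]
    omega
  rw [this, Nat.card_Icc]
  omega

lemma outdeg_big (m c n v : ℕ) (hv : 1 ≤ v) (hvn : v ≤ n)
    (hr : n + jacoIndeg m c v ≤ m * v + c + v) :
    jacoOutdeg m c n v = n - v := by
  rw [jacoOutdeg]
  have : (Finset.Icc 1 n).filter (fun j => JacoArc m c v j) = Finset.Icc (v + 1) n := by
    ext j
    rw [Finset.mem_filter]
    simp only [Finset.mem_filter, Finset.mem_Icc, JacoArc]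
    omega
  rw [this, Nat.card_Icc]
  omega

lemma arcs_eq_sum (m c n : ℕ) :
    jacoArcs m c n = ∑ i ∈ Finset.Icc 1 n, jacoOutdeg m c n i := by
  rw [jacoArcs]
  rw [Finset.card_eq_sum_card_fiberwise (f := Prod.fst) (t := Finset.Icc 1 n)
    (fun p hp => (Finset.mem_product.mp (Finset.mem_filter.mp hp).1).1)]
  refine Finset.sum_congr rfl fun i hi => ?_
  rw [jacoOutdeg]
  refine Finset.card_bij' (fun p _ => p.2) (fun j _ => (i, j)) ?_ ?_ ?_ ?_
  · intro p hp
    simp only [Finset.mem_filter, Finset.mem_product] at hp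
    refine Finset.mem_filter.mpr ⟨hp.1.1.2, ?_⟩
    show JacoArc m c i p.2
    rw [← hp.2]; exact hp.1.2
  · intro j hj
    have hj' := Finset.mem_filter.mp hj
    exact Finset.mem_filter.mpr ⟨Finset.mem_filter.mpr
      ⟨Finset.mem_product.mpr ⟨hi, hj'.1⟩, hj'.2⟩, rfl⟩
  · intro p hp
    exact Prod.ext ((Finset.mem_filter.mp hp).2).symm rfl
  · intro j hj; rfl

lemma sum_Ioc_sub (k n : ℕ) (hkn : k ≤ n) :
    ∑ i ∈ Finset.Ioc k n, (n - i) = (n - k) * (n - k - 1) / 2 := by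
  rw [← Finset.sum_range_id (n - k)]
  apply Finset.sum_nbij' (fun i => n - i) (fun j => n - j)
  · intro i hi; simp only [Finset.mem_Ioc] at hi; simp only [Finset.mem_range]; omega
  · intro j hj; simp only [Finset.mem_range] at hj; simp only [Finset.mem_Ioc]; omega
  · intro i hi; simp only [Finset.mem_Ioc] at hi; omega
  · intro j hj; simp only [Finset.mem_range] at hj; omega
  · intro i hi; rfl

/-- If `v_k` is the prime Jaconian vertex of `J_n(mx)` (smallest index attaining the
maximum total degree), then
`ε(J_n(mx)) = (n-k)(n-k-1)/2 + Σ_{i=1}^{k} d⁺(v_i)`. -/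
theorem jaco_arcs_hope (m n k : ℕ) (hm : 1 ≤ m) (hk1 : 1 ≤ k) (hkn : k ≤ n)
    (hmax : ∀ v : ℕ, 1 ≤ v → v ≤ n → jacoDeg m 0 n v ≤ jacoDeg m 0 n k)
    (hmin : ∀ v : ℕ, 1 ≤ v → v < k → jacoDeg m 0 n v < jacoDeg m 0 n k) :
    jacoArcs m 0 n = (n - k) * (n - k - 1) / 2 + ∑ i ∈ Finset.Icc 1 k, jacoOutdeg m 0 n i := by
  have key : ∀ i, k < i → i ≤ n → n + jacoIndeg m 0 i ≤ m * i + 0 + i := by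
    intro i hki hin
    by_contra hno
    push_neg at hno
    have hk' : m * k + 0 + k < n + jacoIndeg m 0 k := by
      by_contra hk2
      push_neg at hk2
      exact absurd (reachGe_mono m 0 hm (le_of_lt hki) hk2) (not_le.mpr hno)
    have hle : ∀ v, 1 ≤ v → m * v + 0 + v < n + jacoIndeg m 0 v →
        jacoDeg m 0 n v = m * v := by
      intro v hv hrv
      rw [jacoDeg, outdeg_small m 0 n v hm hv hrv]
      have h1 := jacoIndeg_le m 0 v
      have h2 : v ≤ m * v := Nat.le_mul_of_pos_left v hm
      omega
    have dk := hle k hk1 hk'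
    have di := hle i (by omega) hno
    have hmx := hmax i (by omega) hin
    rw [dk, di] at hmx
    have h3 : m * (k + 1) ≤ m * i := Nat.mul_le_mul_left m hki
    have h4 : m * (k + 1) = m * k + m := by ring
    omega
  rw [arcs_eq_sum]
  have hsplit : Finset.Icc 1 n = Finset.Icc 1 k ∪ Finset.Ioc k n := by
    ext x; simp only [Finset.mem_union, Finset.mem_Icc, Finset.mem_Ioc]; omega
  have hdisj : Disjoint (Finset.Icc 1 k) (Finset.Ioc k n) := by
    rw [Finset.disjoint_left]
    intro a ha hb
    simp only [Finset.mem_Icc] at ha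
    simp only [Finset.mem_Ioc] at hb
    omega
  rw [hsplit, Finset.sum_union hdisj]
  have h5 : ∑ i ∈ Finset.Ioc k n, jacoOutdeg m 0 n i = ∑ i ∈ Finset.Ioc k n, (n - i) := by
    refine Finset.sum_congr rfl fun i hi => ?_
    simp only [Finset.mem_Ioc] at hi
    exact outdeg_big m 0 n i (by omega) hi.2 (key i hi.1 hi.2)
  rw [h5, sum_Ioc_sub k n hkn, Nat.add_comm]
end
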